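/- arXiv:1601.03311 — 2 statements merged into one kernel-verified Lean document; each statement's English description precedes it below -/
import Mathlib

section
/- (Freedman's martingale inequality) Let Y_0, Y_1, ..., Y_n be a martingale with respect to a filtration, with increments bounded by M: |Y_k - Y_{k-1}| ≤ M almost surely, and let W_n = Σ_{k=1}^n E[(Y_k - Y_{k-1})² | F_{k-1}] be the predictable quadratic variation. Then for all λ ≥ 0 and σ² ≥ 0, P(|Y_n - Y_0| ≥ λ and W_n ≤ σ²) ≤ 2·exp(-λ²/(2(σ² + Mλ/3))). -/
open MeasureTheory

open Nat


lemma fact_bound (n : ℕ) : 2 * 3^n ≤ (n+2)! := by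
  induction n with
  | zero => simp [Nat.factorial]
  | succ n ih =>
    calc 2 * 3^(n+1) = 3 * (2 * 3^n) := by ring
    _ ≤ 3 * (n+2)! := by omega
    _ ≤ (n+3) * (n+2)! := Nat.mul_le_mul_right _ (by omega)
    _ = (n+3)! := rfl

lemma exp_quad_bound (x v : ℝ) (hx : |x| ≤ v) (hv : v < 3) :
    Real.exp x ≤ 1 + x + x^2 / (2*(1 - v/3)) := by
  have hv0 : 0 ≤ v := le_trans (abs_nonneg x) hx
  have hsum : Summable (fun n : ℕ => x ^ n / n !) := Real.summable_pow_div_factorial x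
  have hsum2 : Summable (fun n : ℕ => x ^ (n+2) / (n+2)!) := by
    have := (summable_nat_add_iff 2).2 hsum
    simpa using this
  have hexp : Real.exp x = ∑' n : ℕ, x ^ n / n ! := by
    rw [Real.exp_eq_exp_ℝ, NormedSpace.exp_eq_tsum_div]
  have h1 : ∑' n : ℕ, x ^ n / n ! = 1 + x + ∑' n : ℕ, x ^ (n+2) / (n+2)! := by
    rw [Summable.tsum_eq_zero_add hsum, Summable.tsum_eq_zero_add ((summable_nat_add_iff 1).2 hsum)]
    simp [Nat.factorial]
    ring
  have hr : (0:ℝ) < 1 - v/3 := by linarith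
  have hgeo : Summable (fun n : ℕ => x^2/2 * (v/3)^n) := by
    apply Summable.mul_left
    exact summable_geometric_of_lt_one (by positivity) (by linarith)
  have hterm : ∀ n : ℕ, x ^ (n+2) / (n+2)! ≤ x^2/2 * (v/3)^n := by
    intro n
    have h1 : x ^ (n+2) ≤ x^2 * v^n := by
      calc x ^ (n+2) ≤ |x ^ (n+2)| := le_abs_self _
      _ = |x|^2 * |x|^n := by rw [abs_pow]; ring
      _ ≤ |x|^2 * v^n := by
          apply mul_le_mul_of_nonneg_left (pow_le_pow_left₀ (abs_nonneg x) hx n) (by positivity)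
      _ = x^2 * v^n := by rw [sq_abs]
    have h2 : ((n+2)! : ℝ) ≥ 2 * 3^n := by exact_mod_cast fact_bound n
    have h3 : (0:ℝ) < (n+2)! := by positivity
    calc x ^ (n+2) / (n+2)! ≤ (x^2 * v^n) / (n+2)! := by
          gcongr
    _ ≤ (x^2 * v^n) / (2 * 3^n) := by
          gcongr
    _ = x^2/2 * (v/3)^n := by
          rw [div_pow]; ring
  have h2 : ∑' n : ℕ, x ^ (n+2) / (n+2)! ≤ x^2 / (2*(1 - v/3)) := by
    calc ∑' n : ℕ, x ^ (n+2) / (n+2)! ≤ ∑' n : ℕ, x^2/2 * (v/3)^n :=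
      Summable.tsum_le_tsum hterm hsum2 hgeo
    _ = x^2/2 * (1 - v/3)⁻¹ := by
      rw [tsum_mul_left, tsum_geometric_of_lt_one (by positivity) (by linarith)]
    _ = x^2 / (2*(1 - v/3)) := by field_simp
  rw [hexp, h1]; linarith


lemma freedman_int {Ω : Type*} {m0 : MeasurableSpace Ω}
    {μ : Measure Ω} [IsProbabilityMeasure μ]
    (ℱ : Filtration ℕ m0) (Y : ℕ → Ω → ℝ) (hY : Martingale Y ℱ μ)
    (M t c : ℝ) (ht : 0 ≤ t) (hc : 0 ≤ c)
    (V : ℕ → Ω → ℝ)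
    (hVmeas : ∀ k, StronglyMeasurable[ℱ k] (V k))
    (hV0 : ∀ᵐ ω ∂μ, ∀ k, 0 ≤ V k ω)
    (n : ℕ)
    (hM : ∀ k < n, ∀ᵐ ω ∂μ, |Y (k + 1) ω - Y k ω| ≤ M)
    (hVcond : ∀ k, k < n →
      (μ[fun ω => Real.exp (t * (Y (k+1) ω - Y k ω)) | ℱ k])
        ≤ᵐ[μ] fun ω => Real.exp (c * V k ω)) :
    ∫ ω, Real.exp (t * (Y n ω - Y 0 ω) - c * ∑ k ∈ Finset.range n, V k ω) ∂μ ≤ 1 := by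
  induction n with
  | zero => simp
  | succ n ih =>
    have hM' : ∀ k < n, ∀ᵐ ω ∂μ, |Y (k + 1) ω - Y k ω| ≤ M := fun k hk => hM k (by omega)
    have ih' := ih hM' (fun k hk => hVcond k (by omega))
    -- measurability of the ℱ n part
    have hGmeas : StronglyMeasurable[ℱ n]
        (fun ω => Real.exp (t * (Y n ω - Y 0 ω) - c * ∑ k ∈ Finset.range (n+1), V k ω)) := by
      apply Real.continuous_exp.comp_stronglyMeasurable
      apply StronglyMeasurable.sub
      · exact ((hY.stronglyAdapted n).sub ((hY.stronglyAdapted 0).mono (ℱ.mono (Nat.zero_le n)))).const_mul t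
      · apply StronglyMeasurable.const_mul
        apply Finset.stronglyMeasurable_fun_sum
        intro k hk
        exact (hVmeas k).mono (ℱ.mono (by simp only [Finset.mem_range] at hk; omega))
    -- a.e. bounds on Y increments, accumulated
    have hYbd : ∀ m, m ≤ n + 1 → ∀ᵐ ω ∂μ, |Y m ω - Y 0 ω| ≤ m * M := by
      intro m hm
      have hMae : ∀ᵐ ω ∂μ, ∀ k, k < n + 1 → |Y (k + 1) ω - Y k ω| ≤ M := by
        rw [ae_all_iff]
        intro k
        by_cases hk : k < n + 1
        · filter_upwards [hM k hk] with ω h _ using h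
        · filter_upwards with ω h using absurd h hk
      filter_upwards [hMae] with ω hω
      induction m with
      | zero => simp
      | succ j ihj =>
        have h1 := hω j (by omega)
        have h2 := ihj (by omega)
        calc |Y (j+1) ω - Y 0 ω| ≤ |Y (j+1) ω - Y j ω| + |Y j ω - Y 0 ω| := by
              have := abs_add_le (Y (j+1) ω - Y j ω) (Y j ω - Y 0 ω)
              have e : Y (j+1) ω - Y 0 ω = (Y (j+1) ω - Y j ω) + (Y j ω - Y 0 ω) := by ring
              rw [e]; exact this
        _ ≤ M + j * M := add_le_add h1 h2
        _ = ((j:ℝ)+1) * M := by ring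
        _ = ((j+1 : ℕ) : ℝ) * M := by push_cast; ring
    -- integrability of S m for m ≤ n+1
    have hSmeas : ∀ m, StronglyMeasurable[ℱ m]
        (fun ω => Real.exp (t * (Y m ω - Y 0 ω) - c * ∑ k ∈ Finset.range m, V k ω)) := by
      intro m
      apply Real.continuous_exp.comp_stronglyMeasurable
      apply StronglyMeasurable.sub
      · exact ((hY.stronglyAdapted m).sub ((hY.stronglyAdapted 0).mono (ℱ.mono (Nat.zero_le m)))).const_mul t
      · apply StronglyMeasurable.const_mul
        apply Finset.stronglyMeasurable_fun_sum
        intro k hk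
        exact (hVmeas k).mono (ℱ.mono (by simp only [Finset.mem_range] at hk; omega))
    have hSint : ∀ m, m ≤ n + 1 → Integrable
        (fun ω => Real.exp (t * (Y m ω - Y 0 ω) - c * ∑ k ∈ Finset.range m, V k ω)) μ := by
      intro m hm
      apply Integrable.mono' (integrable_const (Real.exp (t * (m * M))))
        (((hSmeas m).mono (ℱ.le m)).aestronglyMeasurable)
      filter_upwards [hYbd m hm, hV0] with ω h1 h2
      rw [Real.norm_eq_abs, abs_of_pos (Real.exp_pos _), Real.exp_le_exp]
      have hW : 0 ≤ ∑ k ∈ Finset.range m, V k ω := Finset.sum_nonneg fun k _ => h2 k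
      have : t * (Y m ω - Y 0 ω) ≤ t * (m * M) :=
        mul_le_mul_of_nonneg_left (le_trans (le_abs_self _) h1) ht
      nlinarith
    -- integrability of exp(tΔ)
    have hΔmeas : AEStronglyMeasurable (fun ω => Y (n+1) ω - Y n ω) μ :=
      (((hY.stronglyAdapted (n+1)).mono (ℱ.le (n+1))).sub
        ((hY.stronglyAdapted n).mono (ℱ.le n))).aestronglyMeasurable
    have hexpΔint : Integrable (fun ω => Real.exp (t * (Y (n+1) ω - Y n ω))) μ := by
      apply Integrable.mono' (integrable_const (Real.exp (t * M)))
        (Real.continuous_exp.comp_aestronglyMeasurable (hΔmeas.const_mul t))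
      filter_upwards [hM n (by omega)] with ω h
      rw [Real.norm_eq_abs, abs_of_pos (Real.exp_pos _), Real.exp_le_exp]
      exact mul_le_mul_of_nonneg_left (le_trans (le_abs_self _) h) ht
    -- the decomposition
    have hdecomp : (fun ω => Real.exp (t * (Y (n+1) ω - Y 0 ω)
          - c * ∑ k ∈ Finset.range (n+1), V k ω))
        = fun ω => (Real.exp (t * (Y n ω - Y 0 ω) - c * ∑ k ∈ Finset.range (n+1), V k ω))
            * Real.exp (t * (Y (n+1) ω - Y n ω)) := by
      funext ω
      rw [← Real.exp_add]
      congr 1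
      ring
    have hGexpint : Integrable (fun ω =>
        (Real.exp (t * (Y n ω - Y 0 ω) - c * ∑ k ∈ Finset.range (n+1), V k ω))
          * Real.exp (t * (Y (n+1) ω - Y n ω))) μ := by
      rw [← hdecomp]; exact hSint (n+1) le_rfl
    -- main chain
    calc ∫ ω, Real.exp (t * (Y (n+1) ω - Y 0 ω) - c * ∑ k ∈ Finset.range (n+1), V k ω) ∂μ
        = ∫ ω, (μ[fun ω' => Real.exp (t * (Y (n+1) ω' - Y 0 ω')
            - c * ∑ k ∈ Finset.range (n+1), V k ω') | ℱ n]) ω ∂μ :=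
          (integral_condExp (ℱ.le n)).symm
      _ ≤ ∫ ω, Real.exp (t * (Y n ω - Y 0 ω) - c * ∑ k ∈ Finset.range n, V k ω) ∂μ := by
          apply integral_mono_ae integrable_condExp (hSint n (by omega))
          have hpull : μ[fun ω' => Real.exp (t * (Y (n+1) ω' - Y 0 ω')
                - c * ∑ k ∈ Finset.range (n+1), V k ω') | ℱ n]
              =ᵐ[μ] fun ω => (Real.exp (t * (Y n ω - Y 0 ω)
                - c * ∑ k ∈ Finset.range (n+1), V k ω))
                  * (μ[fun ω' => Real.exp (t * (Y (n+1) ω' - Y n ω')) | ℱ n]) ω := by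
            have := condExp_mul_of_stronglyMeasurable_left (μ := μ) hGmeas
              (by exact hGexpint) hexpΔint
            calc μ[fun ω' => Real.exp (t * (Y (n+1) ω' - Y 0 ω')
                  - c * ∑ k ∈ Finset.range (n+1), V k ω') | ℱ n]
                = μ[(fun ω' => Real.exp (t * (Y n ω' - Y 0 ω')
                    - c * ∑ k ∈ Finset.range (n+1), V k ω'))
                    * fun ω' => Real.exp (t * (Y (n+1) ω' - Y n ω')) | ℱ n] := by
                  rw [hdecomp]
                  rfl
              _ =ᵐ[μ] _ := this
          filter_upwards [hpull, hVcond n (by omega), hV0] with ω h1 h2 h3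
          rw [h1]
          have hG0 : (0:ℝ) < Real.exp (t * (Y n ω - Y 0 ω)
              - c * ∑ k ∈ Finset.range (n+1), V k ω) := Real.exp_pos _
          calc _ ≤ Real.exp (t * (Y n ω - Y 0 ω) - c * ∑ k ∈ Finset.range (n+1), V k ω)
                * Real.exp (c * V n ω) := by
                exact mul_le_mul_of_nonneg_left h2 hG0.le
            _ = Real.exp (t * (Y n ω - Y 0 ω) - c * ∑ k ∈ Finset.range n, V k ω) := by
                rw [← Real.exp_add]
                congr 1
                rw [Finset.sum_range_succ]
                ring
      _ ≤ 1 := ih'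


lemma freedman_condexp {Ω : Type*} {m0 : MeasurableSpace Ω}
    {μ : Measure Ω} [IsProbabilityMeasure μ]
    (ℱ : Filtration ℕ m0) (Y : ℕ → Ω → ℝ) (hY : Martingale Y ℱ μ)
    (M t c : ℝ) (ht : 0 ≤ t)
    (hkey : ∀ u : ℝ, |u| ≤ M → Real.exp (t * u) ≤ 1 + t * u + c * u ^ 2)
    (m : ℕ) (hMm : ∀ᵐ ω ∂μ, |Y (m + 1) ω - Y m ω| ≤ M) :
    (μ[fun ω => Real.exp (t * (Y (m + 1) ω - Y m ω)) | ℱ m])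
      ≤ᵐ[μ] fun ω => Real.exp (c * (μ[fun ω' => (Y (m + 1) ω' - Y m ω') ^ 2 | ℱ m]) ω) := by
  set Δf : Ω → ℝ := fun ω => Y (m + 1) ω - Y m ω with hΔf
  set Δsq : Ω → ℝ := fun ω => (Y (m + 1) ω - Y m ω) ^ 2 with hΔsq
  have hΔmeas : AEStronglyMeasurable Δf μ :=
    (((hY.stronglyAdapted (m+1)).mono (ℱ.le (m+1))).sub
      ((hY.stronglyAdapted m).mono (ℱ.le m))).aestronglyMeasurable
  have hΔint : Integrable Δf μ := (hY.integrable (m+1)).sub (hY.integrable m)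
  have hΔsqint : Integrable Δsq μ := by
    apply Integrable.mono' (integrable_const (M ^ 2)) (hΔmeas.pow 2)
    filter_upwards [hMm] with ω h
    simp only [Pi.pow_apply]
    rw [Real.norm_eq_abs, abs_pow]
    exact pow_le_pow_left₀ (abs_nonneg _) h 2
  have hexpint : Integrable (fun ω => Real.exp (t * Δf ω)) μ := by
    apply Integrable.mono' (integrable_const (Real.exp (t * M)))
      (Real.continuous_exp.comp_aestronglyMeasurable (hΔmeas.const_mul t))
    filter_upwards [hMm] with ω h
    rw [Real.norm_eq_abs, abs_of_pos (Real.exp_pos _), Real.exp_le_exp]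
    exact mul_le_mul_of_nonneg_left (le_trans (le_abs_self _) h) ht
  have hpolyint : Integrable (fun ω => 1 + t * Δf ω + c * Δsq ω) μ :=
    ((integrable_const 1).add (hΔint.const_mul t)).add (hΔsqint.const_mul c)
  -- step 1: monotonicity
  have h1 : μ[fun ω => Real.exp (t * Δf ω) | ℱ m]
      ≤ᵐ[μ] μ[fun ω => 1 + t * Δf ω + c * Δsq ω | ℱ m] := by
    apply condExp_mono hexpint hpolyint
    filter_upwards [hMm] with ω h using hkey (Δf ω) h
  -- step 2: linearity
  have h2 : μ[fun ω => 1 + t * Δf ω + c * Δsq ω | ℱ m]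
      =ᵐ[μ] μ[fun _ => (1:ℝ) | ℱ m] + (μ[t • Δf | ℱ m] + μ[c • Δsq | ℱ m]) := by
    have he : (fun ω => 1 + t * Δf ω + c * Δsq ω)
        = (fun _ => (1:ℝ)) + (t • Δf + c • Δsq) := by
      funext ω
      simp [Pi.add_apply, Pi.smul_apply, smul_eq_mul]
      ring
    rw [he]
    refine (condExp_add (integrable_const 1) ((hΔint.smul t).add (hΔsqint.smul c)) _).trans ?_
    exact Filter.EventuallyEq.rfl.add (condExp_add (hΔint.smul t) (hΔsqint.smul c) _)
  -- step 3: martingale property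
  have h3 : μ[Δf | ℱ m] =ᵐ[μ] 0 := by
    have e0 : μ[Δf | ℱ m] = μ[Y (m+1) - Y m | ℱ m] := rfl
    rw [e0]
    refine (condExp_sub (hY.integrable (m+1)) (hY.integrable m) _).trans ?_
    have e2 : μ[Y (m+1) | ℱ m] =ᵐ[μ] Y m := hY.condExp_ae_eq (Nat.le_succ m)
    have e3 : μ[Y m | ℱ m] = Y m :=
      condExp_of_stronglyMeasurable (ℱ.le m) (hY.stronglyAdapted m) (hY.integrable m)
    rw [e3]
    filter_upwards [e2] with ω h
    simp [h]
  -- combine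
  have h4 := condExp_smul (μ := μ) (m := ℱ m) t Δf
  have h5 := condExp_smul (μ := μ) (m := ℱ m) c Δsq
  filter_upwards [h1, h2, h3, h4, h5] with ω g1 g2 g3 g4 g5
  have hconst : μ[fun _ => (1:ℝ) | ℱ m] = fun _ => (1:ℝ) := condExp_const (ℱ.le m) 1
  calc (μ[fun ω => Real.exp (t * Δf ω) | ℱ m]) ω
      ≤ (μ[fun ω => 1 + t * Δf ω + c * Δsq ω | ℱ m]) ω := g1
    _ = 1 + t * (μ[Δf | ℱ m]) ω + c * (μ[Δsq | ℱ m]) ω := by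
        rw [g2]
        simp only [Pi.add_apply, hconst]
        rw [g4, g5]
        simp [smul_eq_mul]
        ring
    _ = 1 + c * (μ[Δsq | ℱ m]) ω := by
        rw [g3]; simp
    _ ≤ Real.exp (c * (μ[Δsq | ℱ m]) ω) := by
        have := Real.add_one_le_exp (c * (μ[Δsq | ℱ m]) ω)
        linarith


lemma freedman_onesided {Ω : Type*} {m0 : MeasurableSpace Ω}
    {μ : Measure Ω} [IsProbabilityMeasure μ]
    (ℱ : Filtration ℕ m0) (Y : ℕ → Ω → ℝ) (hY : Martingale Y ℱ μ)
    (n : ℕ) (M : ℝ)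
    (hM : ∀ k < n, ∀ᵐ ω ∂μ, |Y (k + 1) ω - Y k ω| ≤ M)
    (t c : ℝ) (ht : 0 ≤ t) (hc : 0 ≤ c)
    (hkey : ∀ u : ℝ, |u| ≤ M → Real.exp (t * u) ≤ 1 + t * u + c * u ^ 2)
    (lam σ2 : ℝ) :
    μ {ω | lam ≤ Y n ω - Y 0 ω ∧
        (∑ k ∈ Finset.range n,
          (μ[fun ω' => (Y (k + 1) ω' - Y k ω') ^ 2 | ℱ k]) ω) ≤ σ2}
      ≤ ENNReal.ofReal (Real.exp (c * σ2 - t * lam)) := by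
  have hV0 : ∀ᵐ ω ∂μ, ∀ k, 0 ≤ (μ[fun ω' => (Y (k + 1) ω' - Y k ω') ^ 2 | ℱ k]) ω :=
    ae_all_iff.2 fun k => condExp_nonneg (Filter.Eventually.of_forall fun ω => sq_nonneg _)
  have hint : ∫ ω, Real.exp (t * (Y n ω - Y 0 ω)
      - c * ∑ k ∈ Finset.range n, (μ[fun ω' => (Y (k + 1) ω' - Y k ω') ^ 2 | ℱ k]) ω) ∂μ ≤ 1 :=
    freedman_int ℱ Y hY M t c ht hc _ (fun k => stronglyMeasurable_condExp) hV0 n hM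
      (fun k hk => freedman_condexp ℱ Y hY M t c ht hkey k (hM k hk))
  -- integrability of the exponential
  have hYbd : ∀ᵐ ω ∂μ, |Y n ω - Y 0 ω| ≤ n * M := by
    have hMae : ∀ᵐ ω ∂μ, ∀ k, k < n → |Y (k + 1) ω - Y k ω| ≤ M := by
      rw [ae_all_iff]
      intro k
      by_cases hk : k < n
      · filter_upwards [hM k hk] with ω h _ using h
      · filter_upwards with ω h using absurd h hk
    filter_upwards [hMae] with ω hω
    have : ∀ m, m ≤ n → |Y m ω - Y 0 ω| ≤ m * M := by
      intro m hm
      induction m with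
      | zero => simp
      | succ j ihj =>
        have h1 := hω j (by omega)
        have h2 := ihj (by omega)
        calc |Y (j+1) ω - Y 0 ω| ≤ |Y (j+1) ω - Y j ω| + |Y j ω - Y 0 ω| := by
              have := abs_add_le (Y (j+1) ω - Y j ω) (Y j ω - Y 0 ω)
              have e : Y (j+1) ω - Y 0 ω = (Y (j+1) ω - Y j ω) + (Y j ω - Y 0 ω) := by ring
              rw [e]; exact this
        _ ≤ M + j * M := add_le_add h1 h2
        _ = ((j:ℝ)+1) * M := by ring
        _ = ((j+1 : ℕ) : ℝ) * M := by push_cast; ring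
    exact this n le_rfl
  have hSmeas : StronglyMeasurable[ℱ n] (fun ω => Real.exp (t * (Y n ω - Y 0 ω)
      - c * ∑ k ∈ Finset.range n, (μ[fun ω' => (Y (k + 1) ω' - Y k ω') ^ 2 | ℱ k]) ω)) := by
    apply Real.continuous_exp.comp_stronglyMeasurable
    apply StronglyMeasurable.sub
    · exact ((hY.stronglyAdapted n).sub ((hY.stronglyAdapted 0).mono (ℱ.mono (Nat.zero_le n)))).const_mul t
    · apply StronglyMeasurable.const_mul
      apply Finset.stronglyMeasurable_fun_sum
      intro k hk
      exact stronglyMeasurable_condExp.mono (ℱ.mono (by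
        simp only [Finset.mem_range] at hk; omega))
  have hSint : Integrable (fun ω => Real.exp (t * (Y n ω - Y 0 ω)
      - c * ∑ k ∈ Finset.range n, (μ[fun ω' => (Y (k + 1) ω' - Y k ω') ^ 2 | ℱ k]) ω)) μ := by
    apply Integrable.mono' (integrable_const (Real.exp (t * (n * M))))
      ((hSmeas.mono (ℱ.le n)).aestronglyMeasurable)
    filter_upwards [hYbd, hV0] with ω h1 h2
    rw [Real.norm_eq_abs, abs_of_pos (Real.exp_pos _), Real.exp_le_exp]
    have hW : 0 ≤ ∑ k ∈ Finset.range n, (μ[fun ω' => (Y (k + 1) ω' - Y k ω') ^ 2 | ℱ k]) ω :=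
      Finset.sum_nonneg fun k _ => h2 k
    have : t * (Y n ω - Y 0 ω) ≤ t * (n * M) :=
      mul_le_mul_of_nonneg_left (le_trans (le_abs_self _) h1) ht
    nlinarith
  -- Markov
  set ε : ℝ := Real.exp (t * lam - c * σ2) with hε
  have hε0 : 0 < ε := Real.exp_pos _
  have hmarkov := mul_meas_ge_le_integral_of_nonneg
    (Filter.Eventually.of_forall fun ω => (Real.exp_pos _).le) hSint ε
  have hsub : {ω | lam ≤ Y n ω - Y 0 ω ∧
        (∑ k ∈ Finset.range n,
          (μ[fun ω' => (Y (k + 1) ω' - Y k ω') ^ 2 | ℱ k]) ω) ≤ σ2}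
      ⊆ {ω | ε ≤ Real.exp (t * (Y n ω - Y 0 ω)
          - c * ∑ k ∈ Finset.range n, (μ[fun ω' => (Y (k + 1) ω' - Y k ω') ^ 2 | ℱ k]) ω)} := by
    intro ω hω
    obtain ⟨h1, h2⟩ := hω
    rw [hε, Set.mem_setOf_eq, Real.exp_le_exp]
    have e1 : t * lam ≤ t * (Y n ω - Y 0 ω) := mul_le_mul_of_nonneg_left h1 ht
    have e2 : c * (∑ k ∈ Finset.range n,
        (μ[fun ω' => (Y (k + 1) ω' - Y k ω') ^ 2 | ℱ k]) ω) ≤ c * σ2 :=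
      mul_le_mul_of_nonneg_left h2 hc
    linarith
  refine le_trans (measure_mono hsub) ?_
  set A := {ω | ε ≤ Real.exp (t * (Y n ω - Y 0 ω)
      - c * ∑ k ∈ Finset.range n, (μ[fun ω' => (Y (k + 1) ω' - Y k ω') ^ 2 | ℱ k]) ω)}
  have hfin : μ A ≠ ⊤ := measure_ne_top μ A
  have htoReal : (μ A).toReal ≤ Real.exp (c * σ2 - t * lam) := by
    have h1 : ε * (μ A).toReal ≤ 1 := le_trans hmarkov hint
    have : (μ A).toReal ≤ 1 / ε := by
      rw [le_div_iff₀ hε0]; linarith [mul_comm ε (μ A).toReal]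
    calc (μ A).toReal ≤ 1 / ε := this
      _ = Real.exp (c * σ2 - t * lam) := by
          rw [hε, one_div, ← Real.exp_neg]
          congr 1
          ring
  calc μ A = ENNReal.ofReal ((μ A).toReal) := (ENNReal.ofReal_toReal hfin).symm
    _ ≤ ENNReal.ofReal (Real.exp (c * σ2 - t * lam)) := ENNReal.ofReal_le_ofReal htoReal



/-- Freedman's martingale inequality: for a martingale `Y` with increments bounded
by `M` and predictable quadratic variation `W n`, for all `λ ≥ 0`, `σ² ≥ 0`,
`P(|Yₙ - Y₀| ≥ λ and Wₙ ≤ σ²) ≤ 2 exp(-λ²/(2(σ² + Mλ/3)))`. -/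
theorem freedman_inequality {Ω : Type*} {m0 : MeasurableSpace Ω}
    {μ : Measure Ω} [IsProbabilityMeasure μ]
    (ℱ : Filtration ℕ m0) (Y : ℕ → Ω → ℝ) (hY : Martingale Y ℱ μ)
    (n : ℕ) (M : ℝ)
    (hM : ∀ k < n, ∀ᵐ ω ∂μ, |Y (k + 1) ω - Y k ω| ≤ M)
    (lam σ2 : ℝ) (hlam : 0 ≤ lam) (hσ2 : 0 ≤ σ2) :
    μ {ω | lam ≤ |Y n ω - Y 0 ω| ∧
        (∑ k ∈ Finset.range n,
          (μ[fun ω' => (Y (k + 1) ω' - Y k ω') ^ 2 | ℱ k]) ω) ≤ σ2}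
      ≤ ENNReal.ofReal (2 * Real.exp (-lam ^ 2 / (2 * (σ2 + M * lam / 3)))) := by
  rcases hlam.eq_or_lt with hl0 | hl0
  · -- lam = 0 : right side is ≥ 1, trivial
    have h1 : (-lam ^ 2 / (2 * (σ2 + M * lam / 3))) = 0 := by
      rw [← hl0]; norm_num
    rw [h1, Real.exp_zero, mul_one]
    calc μ _ ≤ μ Set.univ := measure_mono (Set.subset_univ _)
      _ = 1 := measure_univ
      _ ≤ ENNReal.ofReal 2 := by
          rw [← ENNReal.ofReal_one]
          exact ENNReal.ofReal_le_ofReal (by norm_num)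
  · -- lam > 0
    have hYbd : ∀ᵐ ω ∂μ, |Y n ω - Y 0 ω| ≤ n * M := by
      have hMae : ∀ᵐ ω ∂μ, ∀ k, k < n → |Y (k + 1) ω - Y k ω| ≤ M := by
        rw [ae_all_iff]
        intro k
        by_cases hk : k < n
        · filter_upwards [hM k hk] with ω h _ using h
        · filter_upwards with ω h using absurd h hk
      filter_upwards [hMae] with ω hω
      have : ∀ m, m ≤ n → |Y m ω - Y 0 ω| ≤ m * M := by
        intro m hm
        induction m with
        | zero => simp
        | succ j ihj =>
          have h1 := hω j (by omega)
          have h2 := ihj (by omega)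
          calc |Y (j+1) ω - Y 0 ω| ≤ |Y (j+1) ω - Y j ω| + |Y j ω - Y 0 ω| := by
                have := abs_add_le (Y (j+1) ω - Y j ω) (Y j ω - Y 0 ω)
                have e : Y (j+1) ω - Y 0 ω = (Y (j+1) ω - Y j ω) + (Y j ω - Y 0 ω) := by ring
                rw [e]; exact this
          _ ≤ M + j * M := add_le_add h1 h2
          _ = ((j:ℝ)+1) * M := by ring
          _ = ((j+1 : ℕ) : ℝ) * M := by push_cast; ring
      exact this n le_rfl
    rcases le_or_gt M 0 with hM0 | hM0
    · -- M ≤ 0 : the event is a.e. empty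
      have hzero : μ {ω | lam ≤ |Y n ω - Y 0 ω| ∧
          (∑ k ∈ Finset.range n,
            (μ[fun ω' => (Y (k + 1) ω' - Y k ω') ^ 2 | ℱ k]) ω) ≤ σ2} = 0 := by
        rw [measure_eq_zero_iff_ae_notMem]
        filter_upwards [hYbd] with ω h hmem
        have h1 := hmem.1
        have h2 : (n:ℝ) * M ≤ 0 := mul_nonpos_of_nonneg_of_nonpos (Nat.cast_nonneg n) hM0
        linarith
      rw [hzero]
      exact _root_.zero_le
    · -- M > 0 : the real case
      have hD : 0 < σ2 + M * lam / 3 := by positivity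
      obtain ⟨t, c, ht, hc, hkey, heq⟩ : ∃ t c : ℝ, 0 ≤ t ∧ 0 ≤ c ∧
          (∀ u : ℝ, |u| ≤ M → Real.exp (t * u) ≤ 1 + t * u + c * u ^ 2) ∧
          c * σ2 - t * lam = -lam ^ 2 / (2 * (σ2 + M * lam / 3)) := by
        rcases hσ2.eq_or_lt with h0 | h0
        · -- σ2 = 0
          refine ⟨3 / (2 * M), (3 / (2 * M)) ^ 2 / (2 * (1 - (3 / (2 * M)) * M / 3)),
            by positivity, ?_, ?_, ?_⟩
          · have h1 : (3 / (2 * M)) * M / 3 = 1 / 2 := by field_simp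
            rw [h1]; norm_num; positivity
          · intro u hu
            have htM : (3 / (2 * M)) * M < 3 := by
              have h1 : (3 / (2 * M)) * M = 3 / 2 := by field_simp
              rw [h1]; norm_num
            have hx : |(3 / (2 * M)) * u| ≤ (3 / (2 * M)) * M := by
              rw [abs_mul, abs_of_nonneg (by positivity : (0:ℝ) ≤ 3 / (2 * M))]
              exact mul_le_mul_of_nonneg_left hu (by positivity)
            have := exp_quad_bound ((3 / (2 * M)) * u) ((3 / (2 * M)) * M) hx htM
            refine this.trans (le_of_eq ?_)
            ring
          · rw [← h0]
            have hM' : M ≠ 0 := ne_of_gt hM0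
            have hlam' : lam ≠ 0 := ne_of_gt hl0
            field_simp
            ring
        · -- σ2 > 0
          set D := σ2 + M * lam / 3 with hDdef
          set t := lam / D with htdef
          have ht : 0 ≤ t := by positivity
          have htM : t * M < 3 := by
            rw [htdef, div_mul_eq_mul_div, div_lt_iff₀ hD]
            rw [hDdef]
            nlinarith
          have h1tm : 0 < 1 - t * M / 3 := by linarith
          refine ⟨t, t ^ 2 / (2 * (1 - t * M / 3)), ht, by positivity, ?_, ?_⟩
          · intro u hu
            have hx : |t * u| ≤ t * M := by
              rw [abs_mul, abs_of_nonneg ht]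
              exact mul_le_mul_of_nonneg_left hu ht
            have := exp_quad_bound (t * u) (t * M) hx htM
            refine this.trans (le_of_eq ?_)
            ring
          · have he1 : 1 - t * M / 3 = σ2 / D := by
              rw [htdef, hDdef]
              field_simp
              ring
            rw [he1, htdef]
            rw [hDdef] at *
            field_simp
            ring
      set c' := c with hc'
      -- apply the one-sided bound to Y and -Y
      have hpos := freedman_onesided ℱ Y hY n M hM t c ht hc hkey lam σ2
      have hM' : ∀ k < n, ∀ᵐ ω ∂μ, |(-Y) (k + 1) ω - (-Y) k ω| ≤ M := by
        intro k hk
        filter_upwards [hM k hk] with ω h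
        have e : (-Y) (k+1) ω - (-Y) k ω = -(Y (k+1) ω - Y k ω) := by
          simp [Pi.neg_apply]; ring
        rw [e, abs_neg]; exact h
      have hneg := freedman_onesided ℱ (-Y) hY.neg n M hM' t c ht hc hkey lam σ2
      have hcondeq : ∀ k, (μ[fun ω' => (-Y (k+1) ω' - -Y k ω') ^ 2 | ℱ k])
          = μ[fun ω' => (Y (k + 1) ω' - Y k ω') ^ 2 | ℱ k] := by
        intro k
        have e : (fun ω' => (-Y (k+1) ω' - -Y k ω') ^ 2)
            = (fun ω' => (Y (k + 1) ω' - Y k ω') ^ 2) := by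
          funext ω'
          ring
        rw [e]
      simp only [Pi.neg_apply] at hneg
      simp only [hcondeq] at hneg
      -- split the two-sided event
      have hsplit : {ω | lam ≤ |Y n ω - Y 0 ω| ∧
          (∑ k ∈ Finset.range n,
            (μ[fun ω' => (Y (k + 1) ω' - Y k ω') ^ 2 | ℱ k]) ω) ≤ σ2}
          ⊆ {ω | lam ≤ Y n ω - Y 0 ω ∧
              (∑ k ∈ Finset.range n,
                (μ[fun ω' => (Y (k + 1) ω' - Y k ω') ^ 2 | ℱ k]) ω) ≤ σ2}
            ∪ {ω | lam ≤ -Y n ω - -Y 0 ω ∧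
              (∑ k ∈ Finset.range n,
                (μ[fun ω' => (Y (k + 1) ω' - Y k ω') ^ 2 | ℱ k]) ω) ≤ σ2} := by
        intro ω hω
        obtain ⟨h1, h2⟩ := hω
        rcases le_abs.mp h1 with h | h
        · left; exact ⟨h, h2⟩
        · right
          refine ⟨by linarith [h], h2⟩
      calc μ _ ≤ μ ({ω | lam ≤ Y n ω - Y 0 ω ∧
              (∑ k ∈ Finset.range n,
                (μ[fun ω' => (Y (k + 1) ω' - Y k ω') ^ 2 | ℱ k]) ω) ≤ σ2}
            ∪ {ω | lam ≤ -Y n ω - -Y 0 ω ∧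
              (∑ k ∈ Finset.range n,
                (μ[fun ω' => (Y (k + 1) ω' - Y k ω') ^ 2 | ℱ k]) ω) ≤ σ2}) :=
            measure_mono hsplit
        _ ≤ μ {ω | lam ≤ Y n ω - Y 0 ω ∧
              (∑ k ∈ Finset.range n,
                (μ[fun ω' => (Y (k + 1) ω' - Y k ω') ^ 2 | ℱ k]) ω) ≤ σ2}
            + μ {ω | lam ≤ -Y n ω - -Y 0 ω ∧
              (∑ k ∈ Finset.range n,
                (μ[fun ω' => (Y (k + 1) ω' - Y k ω') ^ 2 | ℱ k]) ω) ≤ σ2} :=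
            measure_union_le _ _
        _ ≤ ENNReal.ofReal (Real.exp (c * σ2 - t * lam))
            + ENNReal.ofReal (Real.exp (c * σ2 - t * lam)) := _root_.add_le_add hpos hneg
        _ = ENNReal.ofReal (2 * Real.exp (c * σ2 - t * lam)) := by
            rw [← ENNReal.ofReal_add (Real.exp_pos _).le (Real.exp_pos _).le]
            congr 1
            ring
        _ = ENNReal.ofReal (2 * Real.exp (-lam ^ 2 / (2 * (σ2 + M * lam / 3)))) := by
            rw [heq]
end

section
/- Let D_0, D_1, D_2, ... be a sequence of non-negative reals (energy deficits after successive phases), and let A_1, A_2, ... be non-negative reals with A_k ≥ D_k - 2 for all k (alive counts), and A_k non-increasing in k. Suppose D_{k+1} ≤ D_k - A_{k+1} + λ holds for k = 0, 1, ..., ℓ-1, where λ ≥ 1 and ℓ = 1 + ⌈3·log_{3/2}(D_0/λ)⌉ (interpreting ℓ = 1 if D_0 ≤ λ). Then A_ℓ < 2λ + 2. -/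
/-- If the non-negative energy deficits `D k` satisfy `D (k+1) ≤ D k - A (k+1) + λ`
for `k < ℓ`, the alive counts `A k` are non-negative, non-increasing and satisfy
`A k ≥ D k - 2`, where `λ ≥ 1` and `ℓ = 1 + ⌈3 log_{3/2}(D 0 / λ)⌉` (so `ℓ = 1`
when `D 0 ≤ λ`), then `A ℓ < 2λ + 2`. -/
theorem alive_count_shrinks (D A : ℕ → ℝ) (lam : ℝ) (hlam : 1 ≤ lam)
    (hD0 : ∀ k, 0 ≤ D k) (hA0 : ∀ k, 0 ≤ A k)
    (hAD : ∀ k, D k - 2 ≤ A k)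
    (hAmono : ∀ k, A (k + 1) ≤ A k)
    (ℓ : ℕ) (hℓ : ℓ = 1 + ⌈(3 : ℝ) * Real.logb (3 / 2) (D 0 / lam)⌉₊)
    (hrec : ∀ k < ℓ, D (k + 1) ≤ D k - A (k + 1) + lam) :
    A ℓ < 2 * lam + 2 := by
  have hanti : Antitone A := antitone_nat_of_succ_le hAmono
  have hℓpos : 0 < ℓ := by omega
  by_cases hcase : D 0 ≤ lam
  · -- easy case: A 1 ≤ D 0 - D 1 + lam ≤ 2 lam
    have h1 := hrec 0 hℓpos
    have hA1 : A 1 ≤ 2 * lam := by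
      have := hD0 1
      linarith
    have : A ℓ ≤ A 1 := hanti hℓpos
    linarith
  · push_neg at hcase
    by_contra hcon
    push_neg at hcon
    -- A k ≥ 2 lam + 2 for all k ≤ ℓ
    have hAbig : ∀ k ≤ ℓ, 2 * lam + 2 ≤ A k := fun k hk =>
      le_trans hcon (hanti hk)
    -- geometric decay
    have hdecay : ∀ k, k + 1 ≤ ℓ → D (k + 1) ≤ (3 / 4) * D k := by
      intro k hk
      have h1 := hrec k (by omega)
      have h2 := hAD (k + 1)
      have h3 := hAbig (k + 1) hk
      linarith
    set n := ⌈(3 : ℝ) * Real.logb (3 / 2) (D 0 / lam)⌉₊ with hn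
    have hℓn : ℓ = n + 1 := by omega
    have hiter : ∀ k, k ≤ n → D k ≤ (3 / 4) ^ k * D 0 := by
      intro k
      induction k with
      | zero => intro _; simp
      | succ m ih =>
        intro hm
        have h1 : D (m + 1) ≤ (3 / 4) * D m := hdecay m (by omega)
        have h2 : D m ≤ (3 / 4) ^ m * D 0 := ih (by omega)
        calc D (m + 1) ≤ (3 / 4) * D m := h1
          _ ≤ (3 / 4) * ((3 / 4) ^ m * D 0) := by nlinarith
          _ = (3 / 4) ^ (m + 1) * D 0 := by ring
    -- show (3/4)^n * D 0 ≤ lam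
    have hlam0 : (0 : ℝ) < lam := by linarith
    set x : ℝ := D 0 / lam with hx
    have hx1 : 1 < x := (one_lt_div hlam0).mpr hcase
    have hL : Real.logb (3 / 2) x ≥ 0 :=
      le_of_lt (Real.logb_pos (by norm_num) hx1)
    have hceil : (3 : ℝ) * Real.logb (3 / 2) x ≤ (n : ℝ) := Nat.le_ceil _
    have hkey : x ≤ (4 / 3 : ℝ) ^ n := by
      have e1 : x = (3 / 2 : ℝ) ^ Real.logb (3 / 2) x :=
        (Real.rpow_logb (by norm_num) (by norm_num) (by linarith)).symm
      have e2 : ((3 / 2 : ℝ)) ^ Real.logb (3 / 2) x ≤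
          ((64 / 27 : ℝ)) ^ Real.logb (3 / 2) x :=
        Real.rpow_le_rpow (by norm_num) (by norm_num) hL
      have e3 : ((64 / 27 : ℝ)) ^ Real.logb (3 / 2) x =
          (4 / 3 : ℝ) ^ ((3 : ℝ) * Real.logb (3 / 2) x) := by
        rw [Real.rpow_mul (by norm_num)]
        congr 1
        rw [show (3 : ℝ) = ((3 : ℕ) : ℝ) by norm_num, Real.rpow_natCast]
        norm_num
      have e4 : (4 / 3 : ℝ) ^ ((3 : ℝ) * Real.logb (3 / 2) x) ≤
          (4 / 3 : ℝ) ^ ((n : ℝ)) :=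
        Real.rpow_le_rpow_of_exponent_le (by norm_num) hceil
      have e5 : (4 / 3 : ℝ) ^ ((n : ℝ)) = (4 / 3 : ℝ) ^ n :=
        Real.rpow_natCast _ _
      calc x = (3 / 2 : ℝ) ^ Real.logb (3 / 2) x := e1
        _ ≤ _ := e2
        _ = _ := e3
        _ ≤ _ := e4
        _ = _ := e5
    have hDn : (3 / 4 : ℝ) ^ n * D 0 ≤ lam := by
      have hD0lam : D 0 ≤ lam * (4 / 3) ^ n := by
        have := (div_le_iff₀ hlam0).mp hkey
        linarith
      have hprod : ((3 / 4 : ℝ) ^ n) * ((4 / 3 : ℝ) ^ n) = 1 := by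
        rw [← mul_pow]; norm_num
      have hpos : (0 : ℝ) < (3 / 4 : ℝ) ^ n := by positivity
      nlinarith [hpos]
    have hDℓ1 : D n ≤ lam := le_trans (hiter n le_rfl) hDn
    have hfin := hrec n (by omega)
    have := hD0 (n + 1)
    have := hAbig ℓ le_rfl
    rw [hℓn] at this
    linarith
end
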